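/- The function f(ϱ) = (ϱ/(2π)) √( (7(1+ϱ²)² φ(ϱ)² + 3(5+3ϱ²) φ(ϱ) + 2) / (4(1+ϱ²)(φ(ϱ)²(1+ϱ²) + φ(ϱ) − 2)) ), where φ(ϱ) = arctan(ϱ)/ϱ, is well-defined for all ϱ > 0; in particular, its denominator satisfies φ(ϱ)²(1+ϱ²) + φ(ϱ) − 2 > 0 for all ϱ > 0. -/

import Mathlib

open Real Set

/-- Derivative of the auxiliary function `F a = a*(2+cos a) - 3*sin a`. -/
lemma aux_hasDerivAt (a : ℝ) :
    HasDerivAt (fun a : ℝ => a * (2 + Real.cos a) - 3 * Real.sin a)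
      ((2 + Real.cos a) + a * (-Real.sin a) - 3 * Real.cos a) a := by
  have h1 : HasDerivAt (fun a : ℝ => a * (2 + Real.cos a))
      (1 * (2 + Real.cos a) + a * (0 + -Real.sin a)) a :=
    (hasDerivAt_id a).mul ((hasDerivAt_const a 2).add (Real.hasDerivAt_cos a))
  have h2 : HasDerivAt (fun a : ℝ => 3 * Real.sin a) (3 * Real.cos a) a := by
    simpa using (Real.hasDerivAt_sin a).const_mul 3
  exact (h1.sub h2).congr_deriv (by ring)

/-- The derivative `2 - 2 cos a - a sin a` is positive on `(0, π/2)`. -/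
lemma aux_deriv_pos {a : ℝ} (h0 : 0 < a) (h2 : a < π / 2) :
    0 < (2 + Real.cos a) + a * (-Real.sin a) - 3 * Real.cos a := by
  have hhalf0 : 0 < a / 2 := by linarith
  have hhalf2 : a / 2 < π / 2 := by linarith
  have hs : 0 < Real.sin (a / 2) := Real.sin_pos_of_pos_of_lt_pi hhalf0 (by
    have := Real.pi_pos; linarith)
  have hc : 0 < Real.cos (a / 2) := Real.cos_pos_of_mem_Ioo ⟨by linarith, hhalf2⟩
  have ht : a / 2 < Real.tan (a / 2) := Real.lt_tan hhalf0 hhalf2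
  have htan : Real.tan (a / 2) = Real.sin (a / 2) / Real.cos (a / 2) := Real.tan_eq_sin_div_cos _
  have hkey : a / 2 * Real.cos (a / 2) < Real.sin (a / 2) := by
    rw [htan, lt_div_iff₀ hc] at ht
    linarith
  have h2a : 2 * (a / 2) = a := by ring
  have hcos : Real.cos a = 1 - 2 * Real.sin (a / 2) ^ 2 := by
    have h := Real.cos_two_mul (a / 2)
    rw [h2a] at h
    nlinarith [Real.sin_sq_add_cos_sq (a / 2)]
  have hsin : Real.sin a = 2 * Real.sin (a / 2) * Real.cos (a / 2) := by
    have h := Real.sin_two_mul (a / 2)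
    rwa [h2a] at h
  rw [hcos, hsin]
  nlinarith [hkey, hs, hc]

/-- Cusa–Huygens type inequality: `3 sin a ≤ a (2 + cos a)` on `[0, π/2)`. -/
lemma cusa {a : ℝ} (h0 : 0 < a) (h2 : a < π / 2) :
    3 * Real.sin a ≤ a * (2 + Real.cos a) := by
  set F : ℝ → ℝ := fun a => a * (2 + Real.cos a) - 3 * Real.sin a with hF
  have hmono : StrictMonoOn F (Icc 0 (π / 2)) := by
    apply strictMonoOn_of_deriv_pos (convex_Icc _ _)
    · exact (Continuous.mul continuous_id (continuous_const.add Real.continuous_cos)).sub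
        (continuous_const.mul Real.continuous_sin) |>.continuousOn
    · intro x hx
      rw [interior_Icc] at hx
      rw [(aux_hasDerivAt x).deriv]
      exact aux_deriv_pos hx.1 hx.2
  have h := hmono (left_mem_Icc.mpr (by positivity)) ⟨le_of_lt h0, le_of_lt h2⟩ h0
  simp only [hF] at h
  norm_num at h
  linarith

theorem feasibility_denominator_pos (ϱ : ℝ) (hϱ : 0 < ϱ) :
    0 < (Real.arctan ϱ / ϱ) ^ 2 * (1 + ϱ ^ 2) + Real.arctan ϱ / ϱ - 2 := by
  set a := Real.arctan ϱ with ha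
  have ha0 : 0 < a := by
    rw [ha, ← Real.arctan_zero]
    exact Real.arctan_strictMono hϱ
  have ha2 : a < π / 2 := Real.arctan_lt_pi_div_two ϱ
  set u := Real.sqrt (1 + ϱ ^ 2) with hu
  have hu1 : 1 < u := by
    rw [hu]
    have : (1:ℝ) = Real.sqrt 1 := (Real.sqrt_one).symm
    rw [this]
    exact Real.sqrt_lt_sqrt (by norm_num) (by nlinarith)
  have hu0 : 0 < u := by linarith
  have husq : u ^ 2 = 1 + ϱ ^ 2 := Real.sq_sqrt (by positivity)
  have hcos : Real.cos a = 1 / u := by rw [ha, Real.cos_arctan, hu]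
  have hsin : Real.sin a = ϱ / u := by rw [ha, Real.sin_arctan, hu]
  -- From Cusa: 3 * (ϱ/u) ≤ a * (2 + 1/u), so a ≥ 3ϱ/(2u+1), i.e. a/ϱ ≥ 3/(1+2u)
  have hcusa := cusa ha0 ha2
  rw [hcos, hsin] at hcusa
  have hkey : 3 * ϱ ≤ a * (2 * u + 1) := by
    have := mul_le_mul_of_nonneg_right hcusa (le_of_lt hu0)
    field_simp at this
    nlinarith [this]
  set φ := a / ϱ with hφ
  have hφpos : 0 < φ := div_pos ha0 hϱ
  have hφge : 3 / (1 + 2 * u) ≤ φ := by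
    rw [hφ, le_div_iff₀ hϱ, div_mul_eq_mul_div, div_le_iff₀ (by linarith : (0:ℝ) < 1 + 2*u)]
    nlinarith
  set c : ℝ := 3 / (1 + 2 * u) with hc
  have hcpos : 0 < c := by positivity
  have hE : c ^ 2 * (1 + ϱ ^ 2) + c - 2 = (u - 1) ^ 2 / (1 + 2 * u) ^ 2 := by
    rw [hc, ← husq]
    field_simp
    ring
  have hpos : 0 < c ^ 2 * (1 + ϱ ^ 2) + c - 2 := by
    rw [hE]
    exact div_pos (pow_pos (by linarith) 2) (by positivity)
  have hge : c ^ 2 * (1 + ϱ ^ 2) + c ≤ φ ^ 2 * (1 + ϱ ^ 2) + φ := by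
    have hsq : c * c ≤ φ * φ := mul_le_mul hφge hφge hcpos.le hφpos.le
    nlinarith [hφge, hsq, sq_nonneg ϱ]
  linarith
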